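/- Let T be a finite tree with at least one edge that is [k]-edge geodetic (where k is the minimum eccentricity over pendant vertices of T), and let S_T be the set of pendant vertices of T. Then ⌈|S_T|/2⌉ ≤ |gen(T)| ≤ |S_T| − 1, where |gen(T)| is the minimum number of k-geodesics of T whose edges together cover all edges of T. -/

import Mathlib

open SimpleGraph
set_option linter.unusedSectionVars false

/-- A walk is a `k`-geodesic if it has length `k` and is a shortest path
between its endpoints. -/
def IsKGeodesic {V : Type*} (G : SimpleGraph V) (k : ℕ) {u v : V} (w : G.Walk u v) : Prop :=
  w.length = k ∧ G.dist u v = k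

/-- A graph is `k`-edge geodetic if every edge lies on some `k`-geodesic. -/
def IsEdgeGeodetic {V : Type*} (G : SimpleGraph V) (k : ℕ) : Prop :=
  ∀ e ∈ G.edgeSet, ∃ (u v : V) (w : G.Walk u v), IsKGeodesic G k w ∧ e ∈ w.edges

/-- A graph is `[k]`-edge geodetic if it is `k`-edge geodetic but not `(k+1)`-edge geodetic. -/
def IsMaxEdgeGeodetic {V : Type*} (G : SimpleGraph V) (k : ℕ) : Prop :=
  IsEdgeGeodetic G k ∧ ¬ IsEdgeGeodetic G (k + 1)

/-- `genNum G k` is the minimum number of `k`-geodesics of `G` whose edges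
together cover all edges of `G`. -/
noncomputable def genNum {V : Type*} (G : SimpleGraph V) (k : ℕ) : ℕ :=
  sInf {r : ℕ | ∃ f : Fin r → Σ u : V, Σ v : V, G.Walk u v,
    (∀ i, IsKGeodesic G k (f i).2.2) ∧
    ∀ e ∈ G.edgeSet, ∃ i, e ∈ (f i).2.2.edges}

/-- Eccentricity of a vertex: the maximum distance from it to any vertex. -/
noncomputable def eccent {V : Type*} [Fintype V] (G : SimpleGraph V) (v : V) : ℕ :=
  Finset.univ.sup (G.dist v)

namespace TreeAux

variable {V : Type*} {G : SimpleGraph V}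

/-- The canonical shortest path between two vertices of a connected graph. -/
noncomputable def tP (hT : G.IsTree) (a b : V) : G.Walk a b :=
  (hT.isConnected.exists_path_of_dist a b).choose

variable [DecidableEq V] (hT : G.IsTree)
include hT

lemma tP_isPath (a b : V) : (tP hT a b).IsPath :=
  (hT.isConnected.exists_path_of_dist a b).choose_spec.1

lemma tP_length (a b : V) : (tP hT a b).length = G.dist a b :=
  (hT.isConnected.exists_path_of_dist a b).choose_spec.2

lemma path_eq_tP {a b : V} (q : G.Walk a b) (hq : q.IsPath) : q = tP hT a b := by
  have := hT.IsAcyclic.path_unique ⟨q, hq⟩ ⟨tP hT a b, tP_isPath hT a b⟩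
  exact congrArg Subtype.val this

lemma path_length_eq {a b : V} (q : G.Walk a b) (hq : q.IsPath) : q.length = G.dist a b := by
  rw [path_eq_tP hT q hq]; exact tP_length hT a b

lemma tP_self (a : V) : tP hT a a = Walk.nil := by
  symm; exact path_eq_tP hT _ Walk.IsPath.nil

lemma tP_reverse (a b : V) : (tP hT a b).reverse = tP hT b a :=
  path_eq_tP hT _ ((tP_isPath hT a b).reverse)

lemma mem_support_tP_comm {a b z : V} (h : z ∈ (tP hT a b).support) :
    z ∈ (tP hT b a).support := by
  rw [← tP_reverse hT a b, Walk.support_reverse, List.mem_reverse]; exact h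

lemma tP_takeUntil {a b z : V} (h : z ∈ (tP hT a b).support) :
    (tP hT a b).takeUntil z h = tP hT a z :=
  path_eq_tP hT _ ((tP_isPath hT a b).takeUntil h)

lemma tP_dropUntil {a b z : V} (h : z ∈ (tP hT a b).support) :
    (tP hT a b).dropUntil z h = tP hT z b :=
  path_eq_tP hT _ ((tP_isPath hT a b).dropUntil h)

lemma dist_add_of_mem {a b z : V} (h : z ∈ (tP hT a b).support) :
    G.dist a b = G.dist a z + G.dist z b := by
  have hspec := (tP hT a b).take_spec h
  have := congrArg Walk.length hspec
  rw [Walk.length_append, tP_takeUntil hT h, tP_dropUntil hT h, tP_length, tP_length,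
    tP_length] at this
  omega


/-- `Side hT x y w` : `w` lies on the `x`-side of the edge `xy` (the path from `w` to `x`
avoids `y`). -/
def Side (hT : G.IsTree) (x y w : V) : Prop := y ∉ (tP hT w x).support

lemma side_self {x y : V} (hne : y ≠ x) : Side hT x y x := by
  unfold Side
  rw [tP_self hT x]
  simp [hne]

lemma side_concat {x y w : V} (hxy : G.Adj x y) (h : Side hT x y w) :
    tP hT w y = (tP hT w x).concat hxy ∧ G.dist w y = G.dist w x + 1 := by
  have hpath : ((tP hT w x).concat hxy).IsPath := by
    rw [Walk.isPath_def, Walk.support_concat, ← List.concat_eq_append]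
    refine List.Nodup.concat h ((tP_isPath hT w x).support_nodup)
  have heq : tP hT w y = (tP hT w x).concat hxy := (path_eq_tP hT _ hpath).symm
  refine ⟨heq, ?_⟩
  have h1 := tP_length hT w y
  rw [heq, Walk.length_concat, tP_length] at h1
  omega

lemma side_mem {x y w : V} (hxy : G.Adj x y) (h : Side hT x y w) :
    x ∈ (tP hT w y).support := by
  rw [(side_concat hT hxy h).1, Walk.support_concat]
  simp [Walk.end_mem_support]

lemma side_not_both {x y w : V} (hxy : G.Adj x y) :
    ¬ (Side hT x y w ∧ Side hT y x w) := by
  rintro ⟨h1, h2⟩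
  exact h2 (side_mem hT hxy h1)

lemma side_total (x y w : V) (hxy : G.Adj x y) : Side hT x y w ∨ Side hT y x w := by
  by_contra hcon
  push_neg at hcon
  obtain ⟨h1, h2⟩ := hcon
  unfold Side at h1 h2
  push_neg at h1 h2
  -- y ∈ support (tP w x), x ∈ support (tP w y)
  have ht : (tP hT w x).takeUntil y h1 = tP hT w y := tP_takeUntil hT h1
  have hxmem : x ∈ ((tP hT w x).takeUntil y h1).support := by rw [ht]; exact h2
  have hnd := (tP_isPath hT w x).support_nodup
  have hspec := (tP hT w x).take_spec h1
  have hsupp := congrArg Walk.support hspec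
  rw [Walk.support_append] at hsupp
  rw [← hsupp] at hnd
  have hxdrop : x ∈ ((tP hT w x).dropUntil y h1).support.tail := by
    have hx2 : x ∈ ((tP hT w x).dropUntil y h1).support := by
      rw [tP_dropUntil hT h1]; exact Walk.end_mem_support _
    have := Walk.support_eq_cons ((tP hT w x).dropUntil y h1)
    rw [this, List.mem_cons] at hx2
    rcases hx2 with h | h
    · exact absurd h hxy.ne
    · exact h
  exact List.disjoint_of_nodup_append hnd hxmem hxdrop

lemma side_mono {x y w z : V} (h : Side hT x y w) (hz : z ∈ (tP hT w x).support) :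
    Side hT x y z := by
  intro hy
  rw [← tP_dropUntil hT hz] at hy
  exact h (Walk.support_dropUntil_subset _ hz hy)

lemma side_cross {x y w w' : V} (hxy : G.Adj x y) (hw : Side hT x y w) (hw' : Side hT y x w') :
    tP hT w w' = (tP hT w x).append (Walk.cons hxy (tP hT y w')) ∧
      G.dist w w' = G.dist w x + 1 + G.dist y w' := by
  have hq : (Walk.cons hxy (tP hT y w')).IsPath := by
    rw [Walk.cons_isPath_iff]
    refine ⟨tP_isPath hT y w', ?_⟩
    intro hx
    have : x ∈ (tP hT w' y).support := by
      exact mem_support_tP_comm hT hx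
    exact hw' this
  have hdisj : (tP hT w x).support.Disjoint (tP hT y w').support := by
    intro z hz1 hz2
    have hz1' : Side hT x y z := side_mono hT hw hz1
    have hz2' : Side hT y x z := by
      have : z ∈ (tP hT w' y).support := mem_support_tP_comm hT hz2
      exact side_mono hT hw' this
    exact side_not_both hT hxy ⟨hz1', hz2'⟩
  have hpath : ((tP hT w x).append (Walk.cons hxy (tP hT y w'))).IsPath := by
    rw [Walk.isPath_def, Walk.support_append]
    refine List.Nodup.append (tP_isPath hT w x).support_nodup ?_ ?_
    · have := hq.support_nodup
      rw [Walk.support_cons] at this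
      exact this.tail
    · intro z hz1 hz2
      rw [Walk.support_cons] at hz2
      exact hdisj hz1 hz2
  have heq : tP hT w w' = _ := (path_eq_tP hT _ hpath).symm
  refine ⟨heq, ?_⟩
  have h1 := tP_length hT w w'
  rw [heq, Walk.length_append, Walk.length_cons, tP_length, tP_length] at h1
  omega

lemma side_cross_dist {x y w w' : V} (hxy : G.Adj x y) (hw : Side hT x y w)
    (hw' : Side hT y x w') : G.dist w w' = G.dist w x + 1 + G.dist y w' :=
  (side_cross hT hxy hw hw').2

lemma side_cross_edge {x y w w' : V} (hxy : G.Adj x y) (hw : Side hT x y w)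
    (hw' : Side hT y x w') : s(x, y) ∈ (tP hT w w').edges := by
  rw [(side_cross hT hxy hw hw').1, Walk.edges_append, Walk.edges_cons]
  simp


omit hT in
lemma dist_eq_one {c n : V} (h : G.Adj c n) : G.dist c n = 1 :=
  dist_eq_one_iff_adj.mpr h

/-- For a neighbour `n` of `c`: either `n` lies on the path from `a` to `c` (one step closer),
or it is one step farther. -/
lemma ext_lemma {a c n : V} (hcn : G.Adj c n) :
    (n ∈ (tP hT a c).support ∧ G.dist a c = G.dist a n + 1) ∨
    (n ∉ (tP hT a c).support ∧ G.dist a n = G.dist a c + 1) := by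
  by_cases hmem : n ∈ (tP hT a c).support
  · left
    refine ⟨hmem, ?_⟩
    have := dist_add_of_mem hT hmem
    rw [dist_eq_one (G := G) (hcn.symm)] at this
    omega
  · right
    refine ⟨hmem, ?_⟩
    have hpath : ((tP hT a c).concat hcn).IsPath := by
      rw [Walk.isPath_def, Walk.support_concat, ← List.concat_eq_append]
      exact List.Nodup.concat hmem ((tP_isPath hT a c).support_nodup)
    have := path_length_eq hT _ hpath
    rw [Walk.length_concat, tP_length] at this
    omega

lemma dist_zero_eq {a b : V} (h : G.dist a b = 0) : a = b := by
  have hr : G.Reachable a b := hT.isConnected.preconnected a b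
  exact (hr.dist_eq_zero_iff.mp h)

/-- Two vertices on a path at the same distance from the start are equal. -/
lemma same_pos {a b n n' : V} (hn : n ∈ (tP hT a b).support) (hn' : n' ∈ (tP hT a b).support)
    (hd : G.dist a n = G.dist a n') : n = n' := by
  have hspec := (tP hT a b).take_spec hn
  have hsupp := congrArg Walk.support hspec
  rw [Walk.support_append] at hsupp
  have hn'2 : n' ∈ ((tP hT a b).takeUntil n hn).support ++ ((tP hT a b).dropUntil n hn).support.tail := by
    rw [hsupp]; exact hn'
  rcases List.mem_append.mp hn'2 with h | h
  · rw [tP_takeUntil hT hn] at h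
    have := dist_add_of_mem hT h
    have h2 : G.dist n' n = 0 := by omega
    exact (dist_zero_eq hT h2).symm
  · have h2 : n' ∈ ((tP hT a b).dropUntil n hn).support := List.mem_of_mem_tail h
    rw [tP_dropUntil hT hn] at h2
    have h3 := dist_add_of_mem hT h2
    have h4 := dist_add_of_mem hT hn
    have h5 := dist_add_of_mem hT hn'
    have h6 : G.dist n n' = 0 := by
      have t1 : G.dist a b = G.dist a n + G.dist n n' + G.dist n' b := by rw [h4, h3]; ring
      omega
    exact dist_zero_eq hT h6

/-- Intermediate value: every distance `j ≤ dist a b` is attained on the path. -/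
lemma mid_lemma {a b : V} {j : ℕ} (hj : j ≤ G.dist a b) :
    ∃ z ∈ (tP hT a b).support, G.dist a z = j := by
  classical
  set p := tP hT a b with hp
  have hnd : p.support.Nodup := (tP_isPath hT a b).support_nodup
  set S : Finset V := p.support.toFinset with hS
  have hcard : S.card = G.dist a b + 1 := by
    rw [hS, List.card_toFinset, hnd.dedup, Walk.length_support, hp, tP_length]
  have hmaps : ∀ z ∈ S, G.dist a z ∈ Finset.range (G.dist a b + 1) := by
    intro z hz
    rw [Finset.mem_range]
    have := dist_add_of_mem hT (List.mem_toFinset.mp hz)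
    omega
  have hinj : Set.InjOn (G.dist a) S := by
    intro z1 h1 z2 h2 hd
    exact same_pos hT (List.mem_toFinset.mp h1) (List.mem_toFinset.mp h2) hd
  have himage : S.image (G.dist a) = Finset.range (G.dist a b + 1) := by
    apply Finset.eq_of_subset_of_card_le
    · intro d hd
      obtain ⟨z, hz, hzd⟩ := Finset.mem_image.mp hd
      exact hzd ▸ hmaps z hz
    · rw [Finset.card_range, Finset.card_image_of_injOn hinj, hcard]
  have : j ∈ S.image (G.dist a) := by
    rw [himage, Finset.mem_range]; omega
  obtain ⟨z, hz, hzj⟩ := Finset.mem_image.mp this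
  exact ⟨z, List.mem_toFinset.mp hz, hzj⟩

section Degree

variable [Fintype V] [DecidableRel G.Adj]

omit hT in
/-- If all neighbours of `c` are at distance `< dist a c` from `a` (for `c ≠ a`), then
`c` has degree 1.  Stated via: `c` maximizes distance from `a` among a set closed
appropriately.  We give the two concrete instances. -/
lemma degree_eq_one_of_unique_nbr {c n₀ : V} (hn₀ : G.Adj c n₀)
    (huniq : ∀ n, G.Adj c n → n = n₀) : G.degree c = 1 := by
  have : G.neighborFinset c = {n₀} := by
    apply Finset.eq_singleton_iff_unique_mem.mpr
    constructor
    · rw [mem_neighborFinset]; exact hn₀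
    · intro n hn; exact huniq n (by rwa [mem_neighborFinset] at hn)
  rw [← card_neighborFinset_eq_degree, this, Finset.card_singleton]

lemma exists_nbr_on_path {a c : V} (hne : c ≠ a) :
    ∃ n, G.Adj c n ∧ n ∈ (tP hT a c).support ∧ G.dist a c = G.dist a n + 1 := by
  have hnotnil : ¬ (tP hT c a).Nil := by
    intro h
    exact hne (Walk.Nil.eq h)
  have hadj : G.Adj c ((tP hT c a).getVert 1) := Walk.adj_snd hnotnil
  refine ⟨(tP hT c a).getVert 1, hadj, ?_, ?_⟩
  · have h1 : (tP hT c a).getVert 1 ∈ (tP hT c a).support := by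
      rw [Walk.mem_support_iff_exists_getVert]
      refine ⟨1, rfl, ?_⟩
      have hlen : (tP hT c a).length ≠ 0 := fun h => hnotnil (Walk.nil_iff_length_eq.mpr h)
      omega
    exact mem_support_tP_comm hT h1
  · rcases ext_lemma hT (a := a) hadj with ⟨_, h⟩ | ⟨hmem, _⟩
    · exact h
    · exfalso
      apply hmem
      have h1 : (tP hT c a).getVert 1 ∈ (tP hT c a).support := by
        rw [Walk.mem_support_iff_exists_getVert]
        refine ⟨1, rfl, ?_⟩
        have hlen : (tP hT c a).length ≠ 0 := fun h => hnotnil (Walk.nil_iff_length_eq.mpr h)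
        omega
      exact mem_support_tP_comm hT h1

/-- A vertex farthest from `a` (over all vertices) is a leaf, provided it is not `a`. -/
lemma leaf_of_farthest {a c : V} (hne : c ≠ a) (hmax : ∀ w, G.dist a w ≤ G.dist a c) :
    G.degree c = 1 := by
  obtain ⟨n₀, hn₀, hn₀mem, hn₀d⟩ := exists_nbr_on_path hT hne
  apply degree_eq_one_of_unique_nbr hn₀
  intro n hn
  rcases ext_lemma hT (a := a) hn with ⟨hmem, hd⟩ | ⟨_, hd⟩
  · exact same_pos hT hmem hn₀mem (by omega)
  · exfalso; have := hmax n; omega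

/-- A vertex of `B`-side farthest from `y` is a leaf. -/
lemma leaf_of_side_farthest {x y u : V} (hxy : G.Adj x y) (hu : Side hT y x u)
    (hmax : ∀ w, Side hT y x w → G.dist y w ≤ G.dist y u) : G.degree u = 1 := by
  by_cases hne : u = y
  · subst hne
    apply degree_eq_one_of_unique_nbr hxy.symm
    intro n hn
    by_contra hnx
    -- n ≠ x; show n ∈ B with greater distance
    have hnmem : n ∉ (tP hT u u).support := by
      rw [tP_self hT u]
      simp [hn.ne']
    rcases ext_lemma hT (a := u) hn with ⟨hmem, _⟩ | ⟨_, hd⟩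
    · exact hnmem hmem
    · have hrev : ((tP hT u u).concat hn).reverse.IsPath := by
        apply Walk.IsPath.reverse
        rw [Walk.isPath_def, Walk.support_concat, ← List.concat_eq_append]
        exact List.Nodup.concat hnmem ((tP_isPath hT u u).support_nodup)
      have heq := path_eq_tP hT _ hrev
      have hside : Side hT u x n := by
        unfold Side
        rw [← heq, Walk.support_reverse, List.mem_reverse, Walk.support_concat, tP_self hT u]
        intro hmemx
        rcases List.mem_append.mp hmemx with h | h
        · rw [Walk.support_nil, List.mem_singleton] at h
          exact hxy.ne h
        · exact hnx (List.mem_singleton.mp h).symm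
      have := hmax n hside
      have hd0 : G.dist u u = 0 := by simp
      omega
  · -- u ≠ y : all neighbours are forced onto the path from y
    obtain ⟨n₀, hn₀, hn₀mem, hn₀d⟩ := exists_nbr_on_path hT (a := y) hne
    apply degree_eq_one_of_unique_nbr hn₀
    intro n hn
    rcases ext_lemma hT (a := y) hn with ⟨hmem, hd⟩ | ⟨hmem, hd⟩
    · exact same_pos hT hmem hn₀mem (by omega)
    · exfalso
      -- n is farther; show n ∈ B to contradict maximality (n = x impossible)
      by_cases hnx : n = x
      · -- then u is adjacent to x; u ∈ B means x ∉ tP u y; but d y n = d y u + 1 with n = x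
        have h1 : G.dist y n = 1 := by rw [hnx]; exact dist_eq_one (G := G) hxy.symm
        -- u ≠ y and dist y x = dist y u + 1 gives dist y u = 0, so u = y, contradiction
        have : G.dist y u = 0 := by omega
        exact hne (dist_zero_eq hT this).symm
      · have hrev : ((tP hT y u).concat hn).reverse.IsPath := by
          apply Walk.IsPath.reverse
          rw [Walk.isPath_def, Walk.support_concat, ← List.concat_eq_append]
          exact List.Nodup.concat hmem ((tP_isPath hT y u).support_nodup)
        have heq := path_eq_tP hT _ hrev
        have hside : Side hT y x n := by
          unfold Side
          rw [← heq, Walk.support_reverse, List.mem_reverse, Walk.support_concat]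
          intro hmemx
          rcases List.mem_append.mp hmemx with h | h
          · exact hu (mem_support_tP_comm hT h)
          · exact hnx (List.mem_singleton.mp h).symm
        have := hmax n hside
        omega

omit hT in
/-- An interior vertex of a path has degree at least 2. -/
lemma two_le_degree_of_interior {a b u : V} (w : G.Walk a b) (hw : w.IsPath)
    (hu : u ∈ w.support) (ha : u ≠ a) (hb : u ≠ b) : 2 ≤ G.degree u := by
  classical
  set p1 := w.takeUntil u hu with hp1
  set p2 := w.dropUntil u hu with hp2
  have hp1path : p1.IsPath := hw.takeUntil hu
  have hp2path : p2.IsPath := hw.dropUntil hu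
  have hp1nn : ¬ p1.reverse.Nil := by
    intro h; exact ha (Walk.Nil.eq h)
  have hp2nn : ¬ p2.Nil := by
    intro h; exact hb (Walk.Nil.eq h)
  set n1 := p1.reverse.getVert 1 with hn1
  set n2 := p2.getVert 1 with hn2
  have hadj1 : G.Adj u n1 := Walk.adj_snd hp1nn
  have hadj2 : G.Adj u n2 := Walk.adj_snd hp2nn
  have hn1mem : n1 ∈ p1.support := by
    have : n1 ∈ p1.reverse.support := by
      rw [Walk.mem_support_iff_exists_getVert]
      refine ⟨1, rfl, ?_⟩
      have hlen : p1.reverse.length ≠ 0 := fun h => hp1nn (Walk.nil_iff_length_eq.mpr h)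
      omega
    rw [Walk.support_reverse, List.mem_reverse] at this
    exact this
  have hn2mem : n2 ∈ p2.support.tail := by
    have h1 : n2 ∈ p2.support := by
      rw [Walk.mem_support_iff_exists_getVert]
      refine ⟨1, rfl, ?_⟩
      have hlen : p2.length ≠ 0 := fun h => hp2nn (Walk.nil_iff_length_eq.mpr h)
      omega
    rw [Walk.support_eq_cons p2, List.mem_cons] at h1
    rcases h1 with h | h
    · exact absurd h.symm hadj2.ne
    · exact h
  have hne : n1 ≠ n2 := by
    intro hcon
    have hnd := hw.support_nodup
    have hspec := w.take_spec hu
    have hsupp := congrArg Walk.support hspec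
    rw [Walk.support_append] at hsupp
    rw [← hsupp] at hnd
    exact List.disjoint_of_nodup_append hnd hn1mem (hcon ▸ hn2mem)
  have hsub : ({n1, n2} : Finset V) ⊆ G.neighborFinset u := by
    intro z hz
    rcases Finset.mem_insert.mp hz with h | h
    · rw [h, mem_neighborFinset]; exact hadj1
    · rw [Finset.mem_singleton.mp h, mem_neighborFinset]; exact hadj2
  have hcard : ({n1, n2} : Finset V).card = 2 := Finset.card_pair hne
  calc 2 = ({n1, n2} : Finset V).card := hcard.symm
    _ ≤ (G.neighborFinset u).card := Finset.card_le_card hsub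
    _ = G.degree u := card_neighborFinset_eq_degree _ _

omit hT in
lemma endpoint_of_leaf_mem {a b u : V} (w : G.Walk a b) (hw : w.IsPath)
    (hu : u ∈ w.support) (hdeg : G.degree u = 1) : u = a ∨ u = b := by
  by_contra hcon
  push_neg at hcon
  have := two_le_degree_of_interior (G := G) w hw hu hcon.1 hcon.2
  omega

end Degree

end TreeAux

open TreeAux in
lemma cover_mem {V : Type*} [Fintype V] [DecidableEq V]
    (G : SimpleGraph V) [DecidableRel G.Adj]
    (hT : G.IsTree) (hE : G.edgeSet.Nonempty)
    (k : ℕ) (hk : k = sInf {d : ℕ | ∃ v : V, G.degree v = 1 ∧ _root_.eccent G v = d}) :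
    ((Finset.univ.filter fun w : V => G.degree w = 1).card - 1) ∈
      {r : ℕ | ∃ f : Fin r → Σ u : V, Σ v : V, G.Walk u v,
        (∀ i, IsKGeodesic G k (f i).2.2) ∧
        ∀ e ∈ G.edgeSet, ∃ i, e ∈ (f i).2.2.edges} := by
  classical
  obtain ⟨a0, b0, h00⟩ : ∃ a b : V, G.Adj a b := by
    obtain ⟨e, he⟩ := hE
    induction e using Sym2.ind with
    | _ a b => exact ⟨a, b, he⟩
  haveI : Nonempty V := ⟨a0⟩
  obtain ⟨c₀, -, hc₀max⟩ := Finset.exists_max_image Finset.univ (G.dist a0)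
    ⟨a0, Finset.mem_univ _⟩
  have hc₀ne : c₀ ≠ a0 := by
    intro h
    have h1 := hc₀max b0 (Finset.mem_univ _)
    rw [h, SimpleGraph.dist_self] at h1
    have h2 := dist_eq_one (G := G) h00
    omega
  have hc₀leaf : G.degree c₀ = 1 :=
    leaf_of_farthest hT hc₀ne (fun w => hc₀max w (Finset.mem_univ _))
  have hDne : {d : ℕ | ∃ w : V, G.degree w = 1 ∧ _root_.eccent G w = d}.Nonempty :=
    ⟨_, c₀, hc₀leaf, rfl⟩
  have hkmem : ∃ w : V, G.degree w = 1 ∧ _root_.eccent G w = k := hk ▸ Nat.sInf_mem hDne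
  obtain ⟨v, hvdeg, hvecc⟩ := hkmem
  have hkle : ∀ u : V, G.degree u = 1 → k ≤ _root_.eccent G u := fun u hu =>
    hk ▸ Nat.sInf_le ⟨u, hu, rfl⟩
  have heccle : ∀ w z : V, G.dist w z ≤ _root_.eccent G w := fun w z =>
    Finset.le_sup (Finset.mem_univ z)
  have heccex : ∀ w : V, ∃ z, _root_.eccent G w = G.dist w z := fun w => by
    obtain ⟨z, -, hz⟩ := Finset.exists_mem_eq_sup Finset.univ Finset.univ_nonempty (G.dist w)
    exact ⟨z, hz⟩
  -- orientation of each edge, with the first coordinate on v's side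
  have horient : ∀ e ∈ G.edgeSet, ∃ p : V × V, G.Adj p.1 p.2 ∧ s(p.1, p.2) = e ∧
      Side hT p.1 p.2 v := by
    intro e he
    induction e using Sym2.ind with
    | _ a b =>
      have hab : G.Adj a b := he
      rcases side_total hT a b v hab with h | h
      · exact ⟨(a, b), hab, rfl, h⟩
      · exact ⟨(b, a), hab.symm, Sym2.eq_swap, h⟩
  choose xy hxy1 hxy2 hxy3 using horient
  -- the deepest leaf beyond each edge
  have hellex : ∀ (e) (he : e ∈ G.edgeSet), ∃ u : V,
      Side hT (xy e he).2 (xy e he).1 u ∧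
      (∀ w, Side hT (xy e he).2 (xy e he).1 w →
        G.dist (xy e he).2 w ≤ G.dist (xy e he).2 u) ∧
      G.degree u = 1 ∧ u ≠ v := by
    intro e he
    have hadj : G.Adj (xy e he).1 (xy e he).2 := hxy1 e he
    obtain ⟨u, hu, hmax⟩ := Finset.exists_max_image
      (Finset.univ.filter fun w => Side hT (xy e he).2 (xy e he).1 w)
      (G.dist (xy e he).2)
      ⟨(xy e he).2, by
        simp only [Finset.mem_filter, Finset.mem_univ, true_and]
        exact side_self hT hadj.ne⟩
    rw [Finset.mem_filter] at hu
    have hmax' : ∀ w, Side hT (xy e he).2 (xy e he).1 w →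
        G.dist (xy e he).2 w ≤ G.dist (xy e he).2 u := fun w hw =>
      hmax w (by simp only [Finset.mem_filter, Finset.mem_univ, true_and]; exact hw)
    have hleaf : G.degree u = 1 := leaf_of_side_farthest hT hadj hu.2 hmax'
    have hunev : u ≠ v := by
      intro h
      exact side_not_both hT hadj ⟨hxy3 e he, h ▸ hu.2⟩
    exact ⟨u, hu.2, hmax', hleaf, hunev⟩
  choose ell hell1 hell2 hell3 hell4 using hellex
  -- the per-leaf covering geodesic
  have hQ : ∀ u : V, (∃ e, ∃ he : e ∈ G.edgeSet, ell e he = u) →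
      ∃ (z : V) (q : G.Walk z u), q.length = k ∧ G.dist z u = k ∧
        ∀ e (he : e ∈ G.edgeSet), ell e he = u → e ∈ q.edges := by
    intro u hu
    obtain ⟨e₁, he₁, hu₁⟩ := hu
    set F : Finset {x // x ∈ G.edgeFinset} :=
      G.edgeFinset.attach.filter
        (fun e => ell e.1 (SimpleGraph.mem_edgeFinset.mp e.2) = u) with hF
    have hF1 : (⟨e₁, SimpleGraph.mem_edgeFinset.mpr he₁⟩ : {x // x ∈ G.edgeFinset}) ∈ F := by
      rw [hF, Finset.mem_filter]
      exact ⟨Finset.mem_attach _ _, hu₁⟩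
    obtain ⟨estar, hestarF, hestarmax⟩ := Finset.exists_max_image F
      (fun e => G.dist u (xy e.1 (SimpleGraph.mem_edgeFinset.mp e.2)).1) ⟨_, hF1⟩
    have hes : estar.1 ∈ G.edgeSet := SimpleGraph.mem_edgeFinset.mp estar.2
    set xs := (xy estar.1 hes).1 with hxs
    set ys := (xy estar.1 hes).2 with hys
    have hadj : G.Adj xs ys := hxy1 _ hes
    have hSxv : Side hT xs ys v := hxy3 _ hes
    have hellstar : ell estar.1 hes = u := by
      rw [hF, Finset.mem_filter] at hestarF
      exact hestarF.2
    have hSyu : Side hT ys xs u := hellstar ▸ hell1 _ hes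
    have hmaxB : ∀ w, Side hT ys xs w → G.dist ys w ≤ G.dist ys u := by
      have h := hell2 _ hes
      rw [hellstar] at h
      exact h
    set t := G.dist u xs with ht
    have hd1 : G.dist u xs = G.dist u ys + 1 := (side_concat hT hadj.symm hSyu).2
    have hcross_vu : G.dist v u = G.dist v xs + 1 + G.dist ys u :=
      side_cross_dist hT hadj hSxv hSyu
    have hcomm_ysu : G.dist ys u = G.dist u ys := SimpleGraph.dist_comm ..
    have htk : t ≤ k := by
      have h1 : G.dist v u ≤ _root_.eccent G v := heccle v u
      rw [hvecc] at h1
      omega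
    have ht1 : 1 ≤ t := by omega
    obtain ⟨a, haC, hamax⟩ := Finset.exists_max_image
      (Finset.univ.filter fun w => Side hT xs ys w) (G.dist xs)
      ⟨xs, by
        simp only [Finset.mem_filter, Finset.mem_univ, true_and]
        exact side_self hT hadj.ne'⟩
    rw [Finset.mem_filter] at haC
    have hamax' : ∀ w, Side hT xs ys w → G.dist xs w ≤ G.dist xs a := fun w hw =>
      hamax w (by simp only [Finset.mem_filter, Finset.mem_univ, true_and]; exact hw)
    have hudeg : G.degree u = 1 := by
      have h := hell3 _ hes
      rwa [hellstar] at h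
    have hka : k ≤ G.dist xs a + t := by
      obtain ⟨c, hc⟩ := heccex u
      have hkc : k ≤ G.dist u c := by
        have h := hkle u hudeg
        rwa [hc] at h
      rcases side_total hT xs ys c hadj with hcC | hcB
      · have h1 : G.dist c u = G.dist c xs + 1 + G.dist ys u :=
          side_cross_dist hT hadj hcC hSyu
        have h2 := hamax' c hcC
        have h3 : G.dist u c = G.dist c u := SimpleGraph.dist_comm ..
        have h4 : G.dist c xs = G.dist xs c := SimpleGraph.dist_comm ..
        omega
      · have h2 : G.dist ys c ≤ G.dist ys u := hmaxB c hcB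
        have h3 : G.dist u c ≤ G.dist u ys + G.dist ys c :=
          hT.isConnected.dist_triangle
        obtain ⟨c', hc'⟩ := heccex v
        have hkc' : k = G.dist v c' := by rw [← hvecc, hc']
        rcases side_total hT xs ys c' hadj with hc'C | hc'B
        · have h4 : G.dist v c' ≤ G.dist v xs + G.dist xs c' :=
            hT.isConnected.dist_triangle
          have h5 := hamax' c' hc'C
          have h6 := hamax' v hSxv
          have h7 : G.dist v xs = G.dist xs v := SimpleGraph.dist_comm ..
          omega
        · have h4 : G.dist v c' = G.dist v xs + 1 + G.dist ys c' :=
            side_cross_dist hT hadj hSxv hc'B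
          have h5 : G.dist ys c' ≤ G.dist ys u := hmaxB c' hc'B
          have h6 := hamax' v hSxv
          have h7 : G.dist v xs = G.dist xs v := SimpleGraph.dist_comm ..
          omega
    have hzk : k - t ≤ G.dist xs a := by omega
    obtain ⟨z, hzmem, hzd⟩ := mid_lemma hT (a := xs) (b := a) hzk
    have hzC : Side hT xs ys z :=
      side_mono hT haC.2 (mem_support_tP_comm hT hzmem)
    have hcross := side_cross hT hadj hzC hSyu
    have hcomm_zxs : G.dist z xs = G.dist xs z := SimpleGraph.dist_comm ..
    refine ⟨z, (tP hT z xs).append (Walk.cons hadj (tP hT ys u)), ?_, ?_, ?_⟩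
    · rw [Walk.length_append, Walk.length_cons, tP_length, tP_length]
      omega
    · rw [hcross.2]
      omega
    · intro e he helle
      have hadje : G.Adj (xy e he).1 (xy e he).2 := hxy1 e he
      have hSxev : Side hT (xy e he).1 (xy e he).2 v := hxy3 e he
      have hSyeu : Side hT (xy e he).2 (xy e he).1 u := helle ▸ hell1 e he
      have hde : G.dist u (xy e he).1 = G.dist u (xy e he).2 + 1 :=
        (side_concat hT hadje.symm hSyeu).2
      have hmaxe : G.dist u (xy e he).1 ≤ t := by
        have hFe : (⟨e, SimpleGraph.mem_edgeFinset.mpr he⟩ : {x // x ∈ G.edgeFinset}) ∈ F := by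
          rw [hF, Finset.mem_filter]
          exact ⟨Finset.mem_attach _ _, helle⟩
        exact hestarmax _ hFe
      have hdec := side_cross hT hadj hSxv hSyu
      have hedec := congrArg Walk.edges hdec.1
      rw [Walk.edges_append, Walk.edges_cons] at hedec
      have hein : e ∈ (tP hT v u).edges := by
        rw [← hxy2 e he]
        exact side_cross_edge hT hadje hSxev hSyeu
      rw [hedec] at hein
      rcases List.mem_append.mp hein with h | h
      · exfalso
        have hyemem : (xy e he).2 ∈ (tP hT v xs).support := by
          rw [← hxy2 e he] at h
          exact Walk.snd_mem_support_of_mem_edges _ h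
        have hyeC : Side hT xs ys (xy e he).2 := side_mono hT hSxv hyemem
        have h1 : G.dist (xy e he).2 u =
            G.dist (xy e he).2 xs + 1 + G.dist ys u :=
          side_cross_dist hT hadj hyeC hSyu
        have h2 : G.dist (xy e he).2 u = G.dist u (xy e he).2 :=
          SimpleGraph.dist_comm ..
        omega
      · rw [Walk.edges_append]
        exact List.mem_append_right _ (by rw [Walk.edges_cons]; exact h)
  choose zf qf hqlen hqdist hqcov using hQ
  set SL := Finset.univ.filter fun w : V => G.degree w = 1 with hSL
  have hvSL : v ∈ SL := by
    rw [hSL, Finset.mem_filter]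
    exact ⟨Finset.mem_univ _, hvdeg⟩
  set E' := SL.erase v with hE'
  have hE'card : E'.card = SL.card - 1 := by
    rw [hE', Finset.card_erase_of_mem hvSL]
  obtain ⟨cfar, hcfar⟩ := heccex v
  set dflt : Σ u' : V, Σ v' : V, G.Walk u' v' := ⟨v, cfar, tP hT v cfar⟩ with hdflt
  set g : V → Σ u' : V, Σ v' : V, G.Walk u' v' := fun u =>
    if h : (∃ e, ∃ he : e ∈ G.edgeSet, ell e he = u) then ⟨zf u h, u, qf u h⟩ else dflt
    with hg
  have hdfltgeo : IsKGeodesic G k dflt.2.2 := by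
    constructor
    · rw [hdflt]
      rw [tP_length hT v cfar, ← hcfar, hvecc]
    · rw [hdflt, ← hcfar, hvecc]
  set EQ : {x // x ∈ E'} ≃ Fin (SL.card - 1) := E'.equivFin.trans (finCongr hE'card)
  refine ⟨fun i => g (EQ.symm i).1, ?_, ?_⟩
  · intro i
    show IsKGeodesic G k (g (EQ.symm i).1).2.2
    by_cases h : ∃ e, ∃ he : e ∈ G.edgeSet, ell e he = (EQ.symm i).1
    · rw [hg]
      dsimp only
      rw [dif_pos h]
      exact ⟨hqlen _ h, hqdist _ h⟩
    · rw [hg]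
      dsimp only
      rw [dif_neg h]
      exact hdfltgeo
  · intro e he
    have huE' : ell e he ∈ E' := by
      rw [hE', Finset.mem_erase]
      refine ⟨hell4 e he, ?_⟩
      rw [hSL, Finset.mem_filter]
      exact ⟨Finset.mem_univ _, hell3 e he⟩
    refine ⟨EQ ⟨ell e he, huE'⟩, ?_⟩
    show e ∈ (g (EQ.symm (EQ ⟨ell e he, huE'⟩)).1).2.2.edges
    rw [Equiv.symm_apply_apply]
    show e ∈ (g (ell e he)).2.2.edges
    rw [hg]
    dsimp only
    rw [dif_pos ⟨e, he, rfl⟩]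
    exact hqcov (ell e he) ⟨e, he, rfl⟩ e he rfl

/-- For a tree `T` with at least one edge, which is `[k]`-edge geodetic for `k` the minimum
eccentricity over pendant vertices, the minimum number of `k`-geodesics covering all edges
of `T` lies between `⌈|S_T| / 2⌉` and `|S_T| - 1`, where `S_T` is the set of pendant
vertices of `T`. -/
theorem tree_genNum_bounds {V : Type*} [Fintype V] [DecidableEq V]
    (G : SimpleGraph V) [DecidableRel G.Adj]
    (hT : G.IsTree) (hE : G.edgeSet.Nonempty)
    (k : ℕ) (hk : k = sInf {d : ℕ | ∃ v : V, G.degree v = 1 ∧ _root_.eccent G v = d}) :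
    ⌈((Finset.univ.filter fun v : V => G.degree v = 1).card : ℚ) / 2⌉₊ ≤ genNum G k ∧
      genNum G k ≤ (Finset.univ.filter fun v : V => G.degree v = 1).card - 1 := by
  classical
  have hmem := cover_mem G hT hE k hk
  have hgen : genNum G k = sInf {r : ℕ | ∃ f : Fin r → Σ u : V, Σ v : V, G.Walk u v,
      (∀ i, IsKGeodesic G k (f i).2.2) ∧
      ∀ e ∈ G.edgeSet, ∃ i, e ∈ (f i).2.2.edges} := rfl
  constructor
  · -- lower bound
    have hSne : {r : ℕ | ∃ f : Fin r → Σ u : V, Σ v : V, G.Walk u v,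
        (∀ i, IsKGeodesic G k (f i).2.2) ∧
        ∀ e ∈ G.edgeSet, ∃ i, e ∈ (f i).2.2.edges}.Nonempty := ⟨_, hmem⟩
    have hInf := Nat.sInf_mem hSne
    set r := sInf {r : ℕ | ∃ f : Fin r → Σ u : V, Σ v : V, G.Walk u v,
      (∀ i, IsKGeodesic G k (f i).2.2) ∧
      ∀ e ∈ G.edgeSet, ∃ i, e ∈ (f i).2.2.edges} with hr
    obtain ⟨f, hgeo, hcov⟩ := hInf
    obtain ⟨e0, he0⟩ := hE
    obtain ⟨i0, -⟩ := hcov e0 he0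
    have hpath : ∀ i : Fin r, (f i).2.2.IsPath := by
      intro i
      obtain ⟨h1, h2⟩ := hgeo i
      exact (f i).2.2.isPath_of_length_eq_dist (by rw [h1, h2])
    have hnbr : ∀ u : V, G.degree u = 1 → ∃ n, G.Adj u n := by
      intro u hu
      have hne : (G.neighborFinset u).Nonempty := by
        rw [← Finset.card_pos]
        rw [SimpleGraph.card_neighborFinset_eq_degree]
        exact hu ▸ Nat.one_pos
      obtain ⟨n, hn⟩ := hne
      rw [SimpleGraph.mem_neighborFinset] at hn
      exact ⟨n, hn⟩
    have hstep : ∀ u ∈ (Finset.univ.filter fun w : V => G.degree w = 1),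
        ∃ p : Fin r × Bool,
          (p.2 = true → u = (f p.1).1) ∧ (p.2 = false → u = (f p.1).2.1) := by
      intro u hu
      rw [Finset.mem_filter] at hu
      obtain ⟨n, hn⟩ := hnbr u hu.2
      obtain ⟨i, hi⟩ := hcov s(u, n) ((G.mem_edgeSet).mpr hn)
      have humem : u ∈ (f i).2.2.support := Walk.fst_mem_support_of_mem_edges _ hi
      rcases TreeAux.endpoint_of_leaf_mem (f i).2.2 (hpath i) humem hu.2 with h | h
      · exact ⟨(i, true), fun _ => h, fun hf => by simp at hf⟩
      · exact ⟨(i, false), fun ht => by simp at ht, fun _ => h⟩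
    choose Fm hFt hFf using hstep
    have hinj : Set.InjOn
        (fun u => if hu : u ∈ (Finset.univ.filter fun w : V => G.degree w = 1)
          then Fm u hu else (i0, true))
        (Finset.univ.filter fun w : V => G.degree w = 1) := by
      intro u1 h1 u2 h2 heq
      have h1' : u1 ∈ Finset.univ.filter fun w : V => G.degree w = 1 := h1
      have h2' : u2 ∈ Finset.univ.filter fun w : V => G.degree w = 1 := h2
      simp only at heq
      rw [dif_pos h1', dif_pos h2'] at heq
      have hfst : (Fm u1 h1').1 = (Fm u2 h2').1 := congrArg Prod.fst heq
      have hsnd : (Fm u1 h1').2 = (Fm u2 h2').2 := congrArg Prod.snd heq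
      cases hb : (Fm u1 h1').2 with
      | true =>
        have e1 := hFt u1 h1' hb
        have e2 := hFt u2 h2' (by rw [← hsnd]; exact hb)
        rw [e1, e2, hfst]
      | false =>
        have e1 := hFf u1 h1' hb
        have e2 := hFf u2 h2' (by rw [← hsnd]; exact hb)
        rw [e1, e2, hfst]
    have hcard := Finset.card_le_card_of_injOn
      (fun u => if hu : u ∈ (Finset.univ.filter fun w : V => G.degree w = 1)
          then Fm u hu else (i0, true))
      (fun u _ => Finset.mem_univ _) hinj
    rw [Finset.card_univ, Fintype.card_prod, Fintype.card_fin, Fintype.card_bool] at hcard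
    rw [hgen]
    apply Nat.ceil_le.mpr
    rw [div_le_iff₀ (by norm_num : (0:ℚ) < 2)]
    exact_mod_cast hcard
  · rw [hgen]
    exact Nat.sInf_le hmem
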